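/- Let n ≥ 1 be an odd natural number and Ω > 0. Then the origin is an unstable equilibrium of the shifted odd system: there exist ζ₀ > 0 and ε > 0 such that for every δ > 0 there exist a solution x = (x₁, x₂) of the shifted odd system defined on some interval [ζ₀, ζ₁] with 0 < ‖x(ζ₀)‖ < δ and ‖x(ζ₁)‖ ≥ ε. -/

import Mathlib

open Set


noncomputable section LaneEmdenAux

/-- clamp `q` to `[l,u]` -/
def leClamp (l u q : ℝ) : ℝ := min (max q l) u

lemma leClamp_dist (l u a b : ℝ) : |leClamp l u a - leClamp l u b| ≤ |a - b| := by
  unfold leClamp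
  calc |min (max a l) u - min (max b l) u| ≤ |max a l - max b l| := by
        simpa using abs_min_sub_min_le_max (max a l) u (max b l) u
  _ ≤ |a - b| := abs_max_sub_max_le_abs a b l

lemma leClamp_mem {l u : ℝ} (h : l ≤ u) (q : ℝ) : leClamp l u q ∈ Icc l u :=
  ⟨le_min (le_max_right _ _) h, min_le_right _ _⟩

lemma leClamp_eq {l u q : ℝ} (h1 : l ≤ q) (h2 : q ≤ u) : leClamp l u q = q := by
  unfold leClamp
  rw [max_eq_left h1, min_eq_left h2]

lemma leClamp_continuous (l u : ℝ) : Continuous (leClamp l u) := by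
  unfold leClamp
  fun_prop

def LEc (n : ℕ) (Ω : ℝ) : ℝ := Ω ^ (-1 / (n:ℝ))

def LEf (n : ℕ) (Ω : ℝ) (p : ℝ) : ℝ := (1 / ((n:ℝ)+1)) * (Ω * (p + LEc n Ω) ^ n - 1)

def LEm (n : ℕ) (Ω : ℝ) : ℝ := (n:ℝ) * Ω * (LEc n Ω) ^ (n-1) / ((n:ℝ)+1)

def LEK (n : ℕ) (Ω : ℝ) : ℝ := (1 / ((n:ℝ)+1)) * (Ω * ((n:ℝ) * (1 + LEc n Ω) ^ (n-1)))

variable {n : ℕ} {Ω : ℝ}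

lemma LEc_pos (hΩ : 0 < Ω) : 0 < LEc n Ω := Real.rpow_pos_of_pos hΩ _

lemma LEm_pos (hn : 1 ≤ n) (hΩ : 0 < Ω) : 0 < LEm n Ω := by
  have := LEc_pos (n := n) hΩ
  have hn' : (0:ℝ) < (n:ℝ) := by exact_mod_cast Nat.pos_of_ne_zero (by omega)
  unfold LEm
  positivity

lemma LEcpow (hn : 1 ≤ n) (hΩ : 0 < Ω) : Ω * (LEc n Ω) ^ n = 1 := by
  have hn0 : (n:ℝ) ≠ 0 := Nat.cast_ne_zero.2 (by omega)
  unfold LEc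
  rw [← Real.rpow_natCast (Ω ^ (-1 / (n:ℝ))) n, ← Real.rpow_mul hΩ.le]
  rw [div_mul_cancel₀ _ hn0]
  rw [Real.rpow_neg_one]
  field_simp

lemma LEf_zero (hn : 1 ≤ n) (hΩ : 0 < Ω) : LEf n Ω 0 = 0 := by
  unfold LEf
  rw [zero_add, LEcpow hn hΩ]
  ring

lemma LEf_lower (hn : 1 ≤ n) (hΩ : 0 < Ω) {p : ℝ} (hp : 0 ≤ p) :
    LEm n Ω * p ≤ LEf n Ω p := by
  unfold LEf LEm
  set c := LEc n Ω with hcdef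
  have hcpos : 0 < c := LEc_pos hΩ
  have key : (1:ℝ) + n * (p / c) ≤ (1 + p / c) ^ n :=
    one_add_mul_le_pow (by nlinarith [div_nonneg hp hcpos.le] : (-2:ℝ) ≤ p / c) n
  have hpc : p + c = c * (1 + p / c) := by field_simp; ring
  have hcn : c ^ n = c ^ (n-1) * c := by
    conv_lhs => rw [show n = (n-1)+1 by omega]
    ring
  have expand : (p + c)^n = c^n * (1 + p/c)^n := by rw [hpc, mul_pow]
  have h1 : c^n * (1 + (n:ℝ) * (p / c)) ≤ (p + c)^n := by
    rw [expand]
    exact mul_le_mul_of_nonneg_left key (by positivity)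
  have h2 : c^n * (1 + (n:ℝ) * (p / c)) = c^n + (n:ℝ) * c^(n-1) * p := by
    rw [hcn]; field_simp
  have hΩc : Ω * c ^ n = 1 := LEcpow hn hΩ
  have h3 : 1 + (n:ℝ) * Ω * c^(n-1) * p ≤ Ω * (p + c)^n := by
    calc 1 + (n:ℝ) * Ω * c^(n-1) * p = Ω * (c^n + (n:ℝ) * c^(n-1) * p) := by
          rw [mul_add, hΩc]; ring
    _ = Ω * (c^n * (1 + (n:ℝ) * (p / c))) := by rw [h2]
    _ ≤ Ω * (p + c)^n := mul_le_mul_of_nonneg_left h1 hΩ.le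
  have hn1 : (0:ℝ) < (n:ℝ)+1 := by positivity
  rw [div_mul_eq_mul_div, div_le_iff₀ hn1, one_div, inv_mul_eq_div, div_mul_eq_mul_div,
    le_div_iff₀ hn1]
  nlinarith [h3]

lemma LEf_nonneg (hn : 1 ≤ n) (hΩ : 0 < Ω) {p : ℝ} (hp : 0 ≤ p) : 0 ≤ LEf n Ω p :=
  le_trans (mul_nonneg (LEm_pos hn hΩ).le hp) (LEf_lower hn hΩ hp)

lemma LEf_mono (hΩ : 0 < Ω) {p q : ℝ} (hp : 0 ≤ p) (hpq : p ≤ q) :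
    LEf n Ω p ≤ LEf n Ω q := by
  unfold LEf
  have hc := LEc_pos (n := n) hΩ
  have h : (p + LEc n Ω) ^ n ≤ (q + LEc n Ω) ^ n :=
    pow_le_pow_left₀ (by linarith) (by linarith) n
  have hn1 : (0:ℝ) < 1 / ((n:ℝ)+1) := by positivity
  have := mul_le_mul_of_nonneg_left h hΩ.le
  nlinarith

lemma LEf_hasDerivAt (p : ℝ) :
    HasDerivAt (LEf n Ω) ((1 / ((n:ℝ)+1)) * (Ω * ((n:ℝ) * (p + LEc n Ω) ^ (n-1)))) p := by
  have h1 : HasDerivAt (fun p : ℝ => p + LEc n Ω) 1 p := (hasDerivAt_id p).add_const _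
  have h2 : HasDerivAt (fun p : ℝ => (p + LEc n Ω) ^ n)
      ((n:ℝ) * (p + LEc n Ω) ^ (n-1) * 1) p := h1.pow n
  have h3 := ((h2.const_mul Ω).sub_const 1).const_mul (1 / ((n:ℝ)+1))
  exact h3.congr_deriv (by ring)

lemma LEf_lip (hn : 1 ≤ n) (hΩ : 0 < Ω) {p q : ℝ} (hp : p ∈ Icc (0:ℝ) 1)
    (hq : q ∈ Icc (0:ℝ) 1) : |LEf n Ω p - LEf n Ω q| ≤ LEK n Ω * |p - q| := by
  have hc := LEc_pos (n := n) hΩ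
  have bound : ∀ r ∈ Icc (0:ℝ) 1,
      ‖(1 / ((n:ℝ)+1)) * (Ω * ((n:ℝ) * (r + LEc n Ω) ^ (n-1)))‖ ≤ LEK n Ω := by
    intro r hr
    have hcr : (0:ℝ) ≤ (r + LEc n Ω) ^ (n-1) := by
      have : (0:ℝ) ≤ r + LEc n Ω := by linarith [hr.1]
      positivity
    rw [Real.norm_eq_abs, abs_of_nonneg (by positivity)]
    unfold LEK
    have h : (r + LEc n Ω) ^ (n-1) ≤ (1 + LEc n Ω) ^ (n-1) :=
      pow_le_pow_left₀ (by linarith [hr.1]) (by linarith [hr.2]) _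
    have hn1 : (0:ℝ) ≤ 1 / ((n:ℝ)+1) := by positivity
    have hn' : (0:ℝ) ≤ (n:ℝ) := Nat.cast_nonneg n
    have := mul_le_mul_of_nonneg_left h (mul_nonneg hΩ.le hn')
    nlinarith
  have := Convex.norm_image_sub_le_of_norm_hasDerivWithin_le
    (f := LEf n Ω) (C := LEK n Ω) (s := Icc (0:ℝ) 1)
    (fun r _ => (LEf_hasDerivAt r).hasDerivWithinAt) bound (convex_Icc 0 1) hq hp
  simpa [Real.norm_eq_abs] using this

lemma LEK_nonneg (hΩ : 0 < Ω) : 0 ≤ LEK n Ω := by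
  have hc := LEc_pos (n := n) hΩ
  unfold LEK
  positivity

lemma LEf_continuous : Continuous (LEf n Ω) := by
  unfold LEf
  fun_prop

end LaneEmdenAux


lemma monoAux {F G : ℝ → ℝ} {A B : ℝ}
    (h : ∀ t ∈ Set.Icc A B, HasDerivWithinAt F (G t) (Set.Icc A B) t)
    (hG : ∀ t ∈ Set.Icc A B, 0 ≤ G t) : MonotoneOn F (Set.Icc A B) := by
  have hda : ∀ t ∈ Ioo A B, HasDerivAt F (G t) t := by
    intro t ht
    exact (h t ⟨ht.1.le, ht.2.le⟩).hasDerivAt (Icc_mem_nhds ht.1 ht.2)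
  apply monotoneOn_of_deriv_nonneg (convex_Icc A B)
    (fun t ht => (h t ht).continuousWithinAt)
  · rw [interior_Icc]
    exact fun t ht => (hda t ht).differentiableAt.differentiableWithinAt
  · rw [interior_Icc]
    intro t ht
    rw [(hda t ht).deriv]
    exact hG t ⟨ht.1.le, ht.2.le⟩


section A
lemma rightNbhd {x : ℝ → ℝ} {S : Set ℝ} {τ b : ℝ} (hx : ContinuousWithinAt x S τ)
    (h : x τ < b) : ∃ η > 0, ∀ s ∈ S, |s - τ| ≤ η → x s < b := by
  have hev : ∀ᶠ s in nhdsWithin τ S, x s < b :=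
    hx.eventually_lt continuousWithinAt_const h
  rw [Filter.eventually_iff, Metric.mem_nhdsWithin_iff] at hev
  obtain ⟨ε, hε, hball⟩ := hev
  refine ⟨ε/2, by linarith, fun s hs hd => ?_⟩
  exact hball ⟨by rw [Metric.mem_ball, Real.dist_eq]; linarith [abs_nonneg (s - τ)], hs⟩
end A

/-- A solution on [ζ₀, ζ₁] of the shifted odd system arising from the
generalized Lane–Emden equation with γ = 1 + 1/n: x₁′ = x₂,
x₂′ = (1/(n+1))·(Ω·(x₁ + Ω^{−1/n})ⁿ − 1) − 2x₂/ζ. -/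
def IsSolShiftedOddOn (n : ℕ) (Ω ζ₀ ζ₁ : ℝ) (x₁ x₂ : ℝ → ℝ) : Prop :=
  ∀ ζ ∈ Set.Icc ζ₀ ζ₁,
    HasDerivWithinAt x₁ (x₂ ζ) (Set.Icc ζ₀ ζ₁) ζ ∧
    HasDerivWithinAt x₂
      ((1 / ((n : ℝ) + 1)) * (Ω * (x₁ ζ + Ω ^ (-1 / (n : ℝ))) ^ n - 1)
        - 2 * x₂ ζ / ζ)
      (Set.Icc ζ₀ ζ₁) ζ

set_option maxHeartbeats 2000000 in
lemma leKey (n : ℕ) (hn : 1 ≤ n) (Ω : ℝ) (hΩ : 0 < Ω) (a : ℝ) (ha0 : 0 < a) (ha : a ≤ 1/2) :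
    ∃ ζ₁ : ℝ, 1 ≤ ζ₁ ∧ ∃ x₁ x₂ : ℝ → ℝ,
      IsSolShiftedOddOn n Ω 1 ζ₁ x₁ x₂ ∧ x₁ 1 = a ∧ x₂ 1 = 0 ∧ 1 ≤ x₁ ζ₁ := by
  obtain ⟨f, hfdef⟩ : ∃ f : ℝ → ℝ, f = LEf n Ω := ⟨_, rfl⟩
  obtain ⟨m, hmdef⟩ : ∃ m : ℝ, m = LEm n Ω := ⟨_, rfl⟩
  have hmpos : 0 < m := hmdef ▸ LEm_pos hn hΩ
  have hflow : ∀ p : ℝ, 0 ≤ p → m * p ≤ f p := fun p hp => by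
    rw [hfdef, hmdef]; exact LEf_lower hn hΩ hp
  have hfnn : ∀ p : ℝ, 0 ≤ p → 0 ≤ f p := fun p hp => by
    rw [hfdef]; exact LEf_nonneg hn hΩ hp
  have hfmono : ∀ p q : ℝ, 0 ≤ p → p ≤ q → f p ≤ f q := fun p q hp hpq => by
    rw [hfdef]; exact LEf_mono hΩ hp hpq
  obtain ⟨K, hKdef⟩ : ∃ K : ℝ, K = LEK n Ω := ⟨_, rfl⟩
  have hK0 : 0 ≤ K := hKdef ▸ LEK_nonneg hΩ
  have hflip : ∀ p q : ℝ, p ∈ Icc (0:ℝ) 1 → q ∈ Icc (0:ℝ) 1 →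
      |f p - f q| ≤ K * |p - q| := fun p q hp hq => by
    rw [hfdef, hKdef]; exact LEf_lip hn hΩ hp hq
  have hfcont : Continuous f := by rw [hfdef]; exact LEf_continuous
  obtain ⟨B, hBdef⟩ : ∃ B : ℝ, B = f 1 := ⟨_, rfl⟩
  have hBpos : 0 < B := by
    have h := hflow 1 zero_le_one
    rw [mul_one] at h
    rw [hBdef]
    exact lt_of_lt_of_le hmpos h
  obtain ⟨Z, hZdef⟩ : ∃ Z : ℝ, Z = 2 * Real.exp (4 / (m * a)) := ⟨_, rfl⟩
  have hZ2 : 2 < Z := by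
    have h1 : (1:ℝ) < Real.exp (4 / (m * a)) := by
      rw [Real.one_lt_exp_iff]; positivity
    rw [hZdef]; nlinarith
  obtain ⟨M, hMdef⟩ : ∃ M : ℝ, M = B * (Z - 1) + 1 := ⟨_, rfl⟩
  have hM1 : 1 ≤ M := by rw [hMdef]; nlinarith
  have hM0 : 0 < M := by linarith
  obtain ⟨σ, hσdef⟩ : ∃ σ : ℝ → ℝ, σ = leClamp (-M) M := ⟨_, rfl⟩
  obtain ⟨π, hπdef⟩ : ∃ π : ℝ → ℝ, π = leClamp 0 1 := ⟨_, rfl⟩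
  obtain ⟨v, hvdef⟩ : ∃ v : ℝ → ℝ × ℝ → ℝ × ℝ,
      v = fun t p => (σ p.2, f (π p.1) - 2 * σ p.2 / t) := ⟨_, rfl⟩
  obtain ⟨CC, hCCdef⟩ : ∃ CC : ℝ, CC = B + 2 * M := ⟨_, rfl⟩
  have hCC0 : 0 < CC := by rw [hCCdef]; nlinarith
  -- basic facts about σ, π
  have hσmem : ∀ q : ℝ, σ q ∈ Icc (-M) M := fun q => by
    rw [hσdef]; exact leClamp_mem (by linarith) q
  have hπmem : ∀ p : ℝ, π p ∈ Icc (0:ℝ) 1 := fun p => by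
    rw [hπdef]; exact leClamp_mem (by norm_num) p
  have hσdist : ∀ x y : ℝ, |σ x - σ y| ≤ |x - y| := fun x y => by
    rw [hσdef]; exact leClamp_dist _ _ _ _
  have hπdist : ∀ x y : ℝ, |π x - π y| ≤ |x - y| := fun x y => by
    rw [hπdef]; exact leClamp_dist _ _ _ _
  have hσeq : ∀ q : ℝ, -M ≤ q → q ≤ M → σ q = q := fun q h1 h2 => by
    rw [hσdef]; exact leClamp_eq h1 h2
  have hπeq : ∀ p : ℝ, 0 ≤ p → p ≤ 1 → π p = p := fun p h1 h2 => by
    rw [hπdef]; exact leClamp_eq h1 h2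
  have hσcont : Continuous σ := by rw [hσdef]; exact leClamp_continuous _ _
  have hπcont : Continuous π := by rw [hπdef]; exact leClamp_continuous _ _
  have hfπ : ∀ p : ℝ, 0 ≤ f (π p) ∧ f (π p) ≤ B := by
    intro p
    exact ⟨hfnn _ (hπmem p).1, hBdef ▸ hfmono _ _ (hπmem p).1 (hπmem p).2⟩
  -- Picard–Lindelöf
  have hPL : IsPicardLindelof v (tmin := 1) (tmax := Z) ⟨1, Set.left_mem_Icc.2 (by linarith)⟩ (a, 0)
      (Real.toNNReal (CC * (Z-1))) 0 (Real.toNNReal CC) (Real.toNNReal (K + 2)) := by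
    constructor
    · -- Lipschitz
      intro t ht
      have hlip : LipschitzWith (Real.toNNReal (K + 2)) (v t) := by
        apply LipschitzWith.of_dist_le_mul
        intro p q
        rw [hvdef]
        have hco : ((Real.toNNReal (K + 2)) : ℝ) = K + 2 := Real.coe_toNNReal _ (by linarith)
        rw [hco, Prod.dist_eq, Prod.dist_eq]
        have hd1 : dist (σ p.2) (σ q.2) ≤ dist p.2 q.2 := by
          rw [Real.dist_eq, Real.dist_eq]; exact hσdist _ _
        have hd2 : dist (f (π p.1) - 2 * σ p.2 / t) (f (π q.1) - 2 * σ q.2 / t)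
            ≤ K * dist p.1 q.1 + 2 * dist p.2 q.2 := by
          rw [Real.dist_eq, Real.dist_eq, Real.dist_eq]
          have e1 : f (π p.1) - 2 * σ p.2 / t - (f (π q.1) - 2 * σ q.2 / t)
              = (f (π p.1) - f (π q.1)) - (2/t) * (σ p.2 - σ q.2) := by ring
          rw [e1]
          have hf12 : |f (π p.1) - f (π q.1)| ≤ K * |p.1 - q.1| :=
            le_trans (hflip _ _ (hπmem p.1) (hπmem q.1))
              (mul_le_mul_of_nonneg_left (hπdist p.1 q.1) hK0)
          have hσ12 : |σ p.2 - σ q.2| ≤ |p.2 - q.2| := hσdist _ _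
          have ht1 : (1:ℝ) ≤ t := ht.1
          have h2t : |2/t| ≤ 2 := by
            rw [abs_of_nonneg (by positivity)]
            rw [div_le_iff₀ (by linarith)]; linarith
          calc |(f (π p.1) - f (π q.1)) - (2/t) * (σ p.2 - σ q.2)|
              ≤ |f (π p.1) - f (π q.1)| + |(2/t) * (σ p.2 - σ q.2)| := abs_sub _ _
          _ = |f (π p.1) - f (π q.1)| + |2/t| * |σ p.2 - σ q.2| := by rw [abs_mul]
          _ ≤ K * |p.1 - q.1| + 2 * |p.2 - q.2| := by
              have h0 : (0:ℝ) ≤ |σ p.2 - σ q.2| := abs_nonneg _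
              nlinarith [abs_nonneg (p.2 - q.2)]
        set D1 := dist p.1 q.1 with hD1
        set D2 := dist p.2 q.2 with hD2
        have hle1 : D1 ≤ max D1 D2 := le_max_left _ _
        have hle2 : D2 ≤ max D1 D2 := le_max_right _ _
        have hdn : (0:ℝ) ≤ max D1 D2 := le_trans dist_nonneg hle2
        have hrw : dist p.1 q.1 = |p.1 - q.1| := Real.dist_eq _ _
        have hrw2 : dist p.2 q.2 = |p.2 - q.2| := Real.dist_eq _ _
        apply max_le
        · calc dist (σ p.2) (σ q.2) ≤ D2 := hd1
          _ ≤ max D1 D2 := hle2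
          _ ≤ (K + 2) * max D1 D2 := le_mul_of_one_le_left hdn (by linarith)
        · calc dist (f (π p.1) - 2 * σ p.2 / t) (f (π q.1) - 2 * σ q.2 / t)
              ≤ K * D1 + 2 * D2 := by rw [hD1, hD2, hrw, hrw2] at *; exact hd2
          _ ≤ K * max D1 D2 + 2 * max D1 D2 := by
              have := mul_le_mul_of_nonneg_left hle1 hK0
              linarith
          _ = (K + 2) * max D1 D2 := by ring
      exact fun x _ y _ => hlip x y
    · -- continuity in t
      intro x hx
      rw [hvdef]
      apply ContinuousOn.prodMk
      · exact continuousOn_const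
      · apply ContinuousOn.sub continuousOn_const
        apply ContinuousOn.div continuousOn_const continuousOn_id
        intro t ht
        have : (1:ℝ) ≤ t := ht.1
        simp only [id_eq]; linarith
    · -- norm bound
      intro t ht x hx
      rw [Real.coe_toNNReal _ hCC0.le]
      rw [hvdef, hCCdef]
      rw [Prod.norm_def]
      apply max_le
      · rw [Real.norm_eq_abs, abs_le]
        constructor
        · linarith [(hσmem x.2).1, hBpos, hM0]
        · linarith [(hσmem x.2).2, hBpos, hM0]
      · rw [Real.norm_eq_abs]
        have ht1 : (1:ℝ) ≤ t := ht.1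
        have hσb : |σ x.2| ≤ M := abs_le.2 ⟨(hσmem x.2).1, (hσmem x.2).2⟩
        have hdiv : |2 * σ x.2 / t| ≤ 2 * M := by
          rw [abs_div, abs_of_nonneg (by linarith : (0:ℝ) ≤ t)]
          rw [div_le_iff₀ (by linarith)]
          rw [abs_mul]
          have : |(2:ℝ)| = 2 := by norm_num
          nlinarith [abs_nonneg (σ x.2)]
        have hfb := hfπ x.1
        have h1 : |f (π x.1)| ≤ B := abs_le.2 ⟨by linarith [hfb.1], hfb.2⟩
        calc |f (π x.1) - 2 * σ x.2 / t| ≤ |f (π x.1)| + |2 * σ x.2 / t| := abs_sub _ _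
        _ ≤ B + 2 * M := by linarith
    · -- C_mul_le_R
      rw [NNReal.coe_zero, sub_zero, Real.coe_toNNReal _ hCC0.le,
        Real.coe_toNNReal _ (mul_nonneg hCC0.le (by linarith))]
      show CC * max (Z - 1) (1 - 1) ≤ CC * (Z - 1)
      have : max (Z - 1) (1 - 1) = Z - 1 := by
        apply max_eq_left; linarith
      rw [this]
  obtain ⟨α, hα0, hα⟩ := hPL.exists_eq_forall_mem_Icc_hasDerivWithinAt₀
  set x₁ : ℝ → ℝ := fun t => (α t).1 with hx₁def
  set x₂ : ℝ → ℝ := fun t => (α t).2 with hx₂def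
  have hx₁1 : x₁ 1 = a := by rw [hx₁def]; simp [hα0]
  have hx₂1 : x₂ 1 = 0 := by rw [hx₂def]; simp [hα0]
  have hαd : ∀ t ∈ Icc (1:ℝ) Z, HasDerivWithinAt α
      ((σ (x₂ t), f (π (x₁ t)) - 2 * σ (x₂ t) / t) : ℝ × ℝ) (Icc 1 Z) t := by
    intro t ht
    have h0 := hα t ht
    rw [hvdef] at h0
    exact h0
  have hx₁d : ∀ t ∈ Icc (1:ℝ) Z, HasDerivWithinAt x₁ (σ (x₂ t)) (Icc 1 Z) t := by
    intro t ht
    exact (ContinuousLinearMap.fst ℝ ℝ ℝ).hasFDerivAt.comp_hasDerivWithinAt t (hαd t ht)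
  have hx₂d : ∀ t ∈ Icc (1:ℝ) Z, HasDerivWithinAt x₂
      (f (π (x₁ t)) - 2 * σ (x₂ t) / t) (Icc 1 Z) t := by
    intro t ht
    exact (ContinuousLinearMap.snd ℝ ℝ ℝ).hasFDerivAt.comp_hasDerivWithinAt t (hαd t ht)
  have hx₁c : ContinuousOn x₁ (Icc 1 Z) := fun t ht => (hx₁d t ht).continuousWithinAt
  have hx₂c : ContinuousOn x₂ (Icc 1 Z) := fun t ht => (hx₂d t ht).continuousWithinAt
  -- the region and the exit time
  obtain ⟨Q, hQdef⟩ : ∃ Q : Set ℝ,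
      Q = Icc 1 Z ∩ (fun s => (x₁ s, x₂ s)) ⁻¹' (Icc (0:ℝ) 1 ×ˢ Icc (0:ℝ) M) := ⟨_, rfl⟩
  have hQclosed : IsClosed Q := by
    rw [hQdef]
    exact ContinuousOn.preimage_isClosed_of_isClosed (hx₁c.prodMk hx₂c) isClosed_Icc
      (isClosed_Icc.prod isClosed_Icc)
  have hQmem : ∀ s, s ∈ Q ↔ s ∈ Icc 1 Z ∧ (0 ≤ x₁ s ∧ x₁ s ≤ 1) ∧ (0 ≤ x₂ s ∧ x₂ s ≤ M) := by
    intro s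
    rw [hQdef]
    simp only [mem_inter_iff, mem_preimage, mem_prod, mem_Icc]
  obtain ⟨A, hAdef⟩ : ∃ A : Set ℝ, A = {t | t ∈ Icc 1 Z ∧ Icc 1 t ⊆ Q} := ⟨_, rfl⟩
  have hAmem : ∀ t, t ∈ A ↔ t ∈ Icc 1 Z ∧ Icc 1 t ⊆ Q := by
    intro t; rw [hAdef]; rfl
  have hA1 : (1:ℝ) ∈ A := by
    rw [hAmem]
    constructor
    · exact ⟨le_refl 1, by linarith⟩
    · intro s hs
      have hs1 : s = 1 := le_antisymm hs.2 hs.1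
      rw [hs1, hQmem]
      exact ⟨⟨le_refl 1, by linarith⟩, ⟨by rw [hx₁1]; constructor <;> linarith,
        by rw [hx₂1]; constructor <;> linarith⟩⟩
  have hAne : A.Nonempty := ⟨1, hA1⟩
  have hAbdd : BddAbove A := ⟨Z, fun t ht => ((hAmem t).1 ht).1.2⟩
  obtain ⟨τ, hτdef⟩ : ∃ τ : ℝ, τ = sSup A := ⟨_, rfl⟩
  have hτmem : τ ∈ Icc 1 Z := by
    rw [hτdef]
    exact ⟨le_csSup hAbdd hA1, csSup_le hAne (fun t ht => ((hAmem t).1 ht).1.2)⟩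
  have hτQ : Icc 1 τ ⊆ Q := by
    intro s hs
    rcases lt_or_eq_of_le hs.2 with hlt | heq
    · rw [hτdef] at hlt
      obtain ⟨t, htA, hst⟩ := exists_lt_of_lt_csSup hAne hlt
      exact ((hAmem t).1 htA).2 ⟨hs.1, hst.le⟩
    · have hAQ : A ⊆ Q := fun t ht => ((hAmem t).1 ht).2 ⟨((hAmem t).1 ht).1.1, le_refl t⟩
      have hcl : τ ∈ closure A := by rw [hτdef]; exact csSup_mem_closure hAne hAbdd
      rw [heq]
      exact (IsClosed.closure_subset_iff hQclosed).2 hAQ hcl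
  have hIccsub : Icc (1:ℝ) τ ⊆ Icc 1 Z := Icc_subset_Icc le_rfl hτmem.2
  -- on [1,τ] the clamps are inactive: genuine solution
  have hbounds : ∀ s ∈ Icc (1:ℝ) τ, (0 ≤ x₁ s ∧ x₁ s ≤ 1) ∧ (0 ≤ x₂ s ∧ x₂ s ≤ M) :=
    fun s hs => ((hQmem s).1 (hτQ hs)).2
  have hσx : ∀ s ∈ Icc (1:ℝ) τ, σ (x₂ s) = x₂ s := by
    intro s hs
    exact hσeq _ (by linarith [(hbounds s hs).2.1]) (hbounds s hs).2.2
  have hπx : ∀ s ∈ Icc (1:ℝ) τ, π (x₁ s) = x₁ s := by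
    intro s hs
    exact hπeq _ (hbounds s hs).1.1 (hbounds s hs).1.2
  have hsol1 : ∀ s ∈ Icc (1:ℝ) τ, HasDerivWithinAt x₁ (x₂ s) (Icc 1 τ) s := by
    intro s hs
    have h := (hx₁d s (hIccsub hs)).mono hIccsub
    rwa [hσx s hs] at h
  have hsol2 : ∀ s ∈ Icc (1:ℝ) τ, HasDerivWithinAt x₂ (f (x₁ s) - 2 * x₂ s / s) (Icc 1 τ) s := by
    intro s hs
    have h := (hx₂d s (hIccsub hs)).mono hIccsub
    rwa [hσx s hs, hπx s hs] at h
  -- x₁ is nondecreasing, hence ≥ a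
  have hx₁mono : MonotoneOn x₁ (Icc 1 τ) :=
    monoAux hsol1 (fun s hs => (hbounds s hs).2.1)
  have h1mem : (1:ℝ) ∈ Icc (1:ℝ) τ := ⟨le_refl 1, hτmem.1⟩
  have hx₁a : ∀ s ∈ Icc (1:ℝ) τ, a ≤ x₁ s := by
    intro s hs
    have := hx₁mono h1mem hs hs.1
    rwa [hx₁1] at this
  -- lower bound for x₂ : s^2 x₂ s ≥ m a (s-1)
  have hgrow : MonotoneOn (fun s => s^2 * x₂ s - m * a * s) (Icc 1 τ) := by
    apply monoAux (G := fun s => s^2 * f (x₁ s) - m * a)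
    · intro s hs
      have hs0 : s ≠ 0 := by have := hs.1; intro h; rw [h] at this; linarith
      have hp : HasDerivWithinAt (fun s : ℝ => s^2) (2 * s) (Icc 1 τ) s := by
        simpa using (hasDerivAt_pow 2 s).hasDerivWithinAt
      have hmul := hp.mul (hsol2 s hs)
      have hlin : HasDerivWithinAt (fun s : ℝ => m * a * s) (m * a) (Icc 1 τ) s := by
        simpa using (hasDerivAt_id s).const_mul (m * a) |>.hasDerivWithinAt
      have := hmul.sub hlin
      have heq : 2 * s * x₂ s + s ^ 2 * (f (x₁ s) - 2 * x₂ s / s) - m * a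
          = s^2 * f (x₁ s) - m * a := by
        field_simp
        ring
      rwa [heq] at this
    · intro s hs
      have hfl : m * x₁ s ≤ f (x₁ s) := hflow _ (hbounds s hs).1.1
      have hma : m * a ≤ m * x₁ s := mul_le_mul_of_nonneg_left (hx₁a s hs) hmpos.le
      have hs1 : (1:ℝ) ≤ s := hs.1
      have hfnn' : 0 ≤ f (x₁ s) := hfnn _ (hbounds s hs).1.1
      have hs2 : (1:ℝ) ≤ s^2 := by nlinarith
      have hmul : 1 * f (x₁ s) ≤ s^2 * f (x₁ s) := mul_le_mul_of_nonneg_right hs2 hfnn'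
      rw [one_mul] at hmul
      linarith
  have hx₂lb : ∀ s ∈ Icc (1:ℝ) τ, m * a * (s - 1) ≤ s^2 * x₂ s := by
    intro s hs
    have h := hgrow h1mem hs hs.1
    simp only [one_pow, hx₂1, mul_zero, mul_one] at h
    linarith
  -- upper bound x₂ s ≤ B (s-1)
  have hshrink : MonotoneOn (fun s => B * (s - 1) - x₂ s) (Icc 1 τ) := by
    apply monoAux (G := fun s => B - (f (x₁ s) - 2 * x₂ s / s))
    · intro s hs
      have hlin : HasDerivWithinAt (fun s : ℝ => B * (s - 1)) B (Icc 1 τ) s := by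
        simpa using ((hasDerivAt_id s).sub_const 1).const_mul B |>.hasDerivWithinAt
      exact hlin.sub (hsol2 s hs)
    · intro s hs
      have hfu : f (x₁ s) ≤ B := hBdef ▸ hfmono _ _ (hbounds s hs).1.1 (hbounds s hs).1.2
      have hx2 : 0 ≤ x₂ s := (hbounds s hs).2.1
      have hs1 : (1:ℝ) ≤ s := hs.1
      have : 0 ≤ 2 * x₂ s / s := by positivity
      linarith
  have hx₂ub : ∀ s ∈ Icc (1:ℝ) τ, x₂ s ≤ B * (s - 1) := by
    intro s hs
    have h := hshrink h1mem hs hs.1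
    simp only [hx₂1, sub_self, mul_zero, sub_zero, zero_sub, neg_zero] at h
    linarith
  -- logarithmic growth estimate
  have hlog : 2 ≤ τ → x₁ 2 + m * a / 2 * (Real.log τ - Real.log 2) ≤ x₁ τ := by
    intro h2τ
    have hsub : Icc (2:ℝ) τ ⊆ Icc 1 τ := Icc_subset_Icc (by norm_num) le_rfl
    have hφ : MonotoneOn (fun s => x₁ s - m * a / 2 * Real.log s) (Icc 2 τ) := by
      apply monoAux (G := fun s => x₂ s - m * a / 2 / s)
      · intro s hs
        have hs2 : (2:ℝ) ≤ s := hs.1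
        have hs0 : s ≠ 0 := by intro h0; rw [h0] at hs2; linarith
        have hlogd : HasDerivWithinAt Real.log s⁻¹ (Icc 2 τ) s :=
          (Real.hasDerivAt_log hs0).hasDerivWithinAt
        have h1 := (hsol1 s (hsub hs)).mono hsub
        have h2 := h1.sub (hlogd.const_mul (m * a / 2))
        have heq : x₂ s - m * a / 2 * s⁻¹ = x₂ s - m * a / 2 / s := by
          ring
        rwa [heq] at h2
      · intro s hs
        have hs2 : (2:ℝ) ≤ s := hs.1
        have hs0 : (0:ℝ) < s := by linarith
        have hlb := hx₂lb s (hsub hs)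
        rw [sub_nonneg, div_le_iff₀ hs0]
        nlinarith [hlb, mul_pos hmpos ha0,
          mul_nonneg (mul_pos hmpos ha0).le (by linarith : (0:ℝ) ≤ s - 2)]
    have h2m : (2:ℝ) ∈ Icc (2:ℝ) τ := ⟨le_refl 2, h2τ⟩
    have hτm : τ ∈ Icc (2:ℝ) τ := ⟨h2τ, le_refl τ⟩
    have h := hφ h2m hτm h2τ
    simp only at h
    linarith
  -- τ < Z : otherwise the logarithmic growth contradicts x₁ ≤ 1
  have hτlt : τ < Z := by
    rcases lt_or_eq_of_le hτmem.2 with h | h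
    · exact h
    · exfalso
      have h2τ : 2 ≤ τ := by rw [h]; linarith
      have hgrowth := hlog h2τ
      have hma0 : 0 < m * a := by positivity
      have hlogZ : Real.log τ - Real.log 2 = 4 / (m * a) := by
        rw [h, hZdef, Real.log_mul two_ne_zero (Real.exp_ne_zero _), Real.log_exp]
        ring
      rw [hlogZ] at hgrowth
      have hval : m * a / 2 * (4 / (m * a)) = 2 := by
        field_simp
        ring
      rw [hval] at hgrowth
      have hx12 : 0 ≤ x₁ 2 := (hbounds 2 ⟨by norm_num, h2τ⟩).1.1
      have hx1τ : x₁ τ ≤ 1 := (hbounds τ ⟨hτmem.1, le_refl τ⟩).1.2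
      linarith
  -- x₁ reaches 1 at τ (otherwise the solution could be continued in Q beyond τ)
  have hx₁τ : 1 ≤ x₁ τ := by
    by_contra hlt
    push_neg at hlt
    obtain ⟨g, hgdef⟩ : ∃ g : ℝ → ℝ, g = fun s => f (π (x₁ s)) - 2 * σ (x₂ s) / s := ⟨_, rfl⟩
    have hgcont : ContinuousOn g (Icc 1 Z) := by
      rw [hgdef]
      apply ContinuousOn.sub
      · exact ((hfcont.comp hπcont).comp_continuousOn hx₁c)
      · apply ContinuousOn.div
        · exact continuousOn_const.mul (hσcont.comp_continuousOn hx₂c)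
        · exact continuousOn_id
        · intro t ht
          have ht1 := ht.1
          intro h0
          rw [h0] at ht1
          linarith
    have hgd : ∀ t ∈ Icc (1:ℝ) Z, HasDerivWithinAt x₂ (g t) (Icc 1 Z) t := by
      intro t ht
      rw [hgdef]
      exact hx₂d t ht
    have hτQm : τ ∈ Icc (1:ℝ) τ := ⟨hτmem.1, le_refl τ⟩
    have hbτ := hbounds τ hτQm
    have hx₂τM : x₂ τ < M := by
      have h1 := hx₂ub τ hτQm
      have h2 : B * (τ - 1) ≤ B * (Z - 1) := mul_le_mul_of_nonneg_left (by linarith) hBpos.le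
      rw [hMdef]
      linarith
    have hx₁τa : a ≤ x₁ τ := hx₁a τ hτQm
    have hc₁ : ContinuousWithinAt x₁ (Icc 1 Z) τ := hx₁c τ hτmem
    have hc₂ : ContinuousWithinAt x₂ (Icc 1 Z) τ := hx₂c τ hτmem
    obtain ⟨η₁, hη₁p, hP₁⟩ := rightNbhd hc₁ hlt
    obtain ⟨η₂, hη₂p, hP₂⟩ := rightNbhd hc₁.neg (show -x₁ τ < 0 by linarith)
    obtain ⟨η₃, hη₃p, hP₃⟩ := rightNbhd hc₂ hx₂τM
    have hη₄ : ∃ η₄ > 0, ∀ s ∈ Icc (1:ℝ) Z, τ ≤ s → s - τ ≤ η₄ → 0 ≤ x₂ s := by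
      rcases eq_or_lt_of_le hτmem.1 with hτ1 | hτ1
      · -- τ = 1, use that the derivative of x₂ is positive near τ
        have hx₂τ0 : x₂ τ = 0 := by rw [← hτ1, hx₂1]
        have hgτ : 0 < g τ := by
          rw [hgdef]
          simp only
          rw [← hτ1, hx₁1, hx₂1, hσeq 0 (by linarith) (by linarith), hπeq a (by linarith) (by linarith)]
          have : (0:ℝ) < m * a := by positivity
          have hfa := hflow a ha0.le
          simp only [mul_zero, zero_div, sub_zero]
          linarith
        obtain ⟨η₄, hη₄p, hg₄⟩ := rightNbhd ((hgcont τ hτmem).neg) (show -g τ < 0 by linarith)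
        refine ⟨η₄, hη₄p, ?_⟩
        intro s hs hτs hsτ
        have hsub2 : Icc τ s ⊆ Icc (1:ℝ) Z := Icc_subset_Icc hτmem.1 hs.2
        have hmono : MonotoneOn x₂ (Icc τ s) := by
          apply monoAux (G := g)
          · intro r hr
            exact (hgd r (hsub2 hr)).mono hsub2
          · intro r hr
            have habs : |r - τ| ≤ η₄ := by
              rw [abs_of_nonneg (by linarith [hr.1])]
              linarith [hr.2]
            have := hg₄ r (hsub2 hr) habs
            simp only [Pi.neg_apply] at this
            linarith
        have h := hmono ⟨le_refl τ, hτs⟩ ⟨hτs, le_refl s⟩ hτs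
        rw [hx₂τ0] at h
        exact h
      · -- τ > 1 : x₂ τ is strictly positive
        have hx₂τpos : 0 < x₂ τ := by
          have hlb := hx₂lb τ hτQm
          have h1 : 0 < m * a * (τ - 1) := by
            have : 0 < τ - 1 := by linarith
            positivity
          nlinarith [sq_nonneg τ]
        obtain ⟨η₄, hη₄p, h₄⟩ := rightNbhd hc₂.neg (show -x₂ τ < 0 by linarith)
        refine ⟨η₄, hη₄p, fun s hs hτs hsτ => ?_⟩
        have := h₄ s hs (by rw [abs_of_nonneg (by linarith)]; exact hsτ)
        simp only [Pi.neg_apply] at this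
        linarith
    obtain ⟨η₄, hη₄p, hP₄⟩ := hη₄
    obtain ⟨η, hηpos, hηle⟩ : ∃ η : ℝ, 0 < η ∧
        (η ≤ η₁ ∧ η ≤ η₂ ∧ η ≤ η₃ ∧ η ≤ η₄ ∧ τ + η ≤ Z) := by
      refine ⟨min (min η₁ η₂) (min (min η₃ η₄) (Z - τ)), ?_, ?_, ?_, ?_, ?_, ?_⟩
      · have : 0 < Z - τ := by linarith
        positivity
      · exact le_trans (min_le_left _ _) (min_le_left _ _)
      · exact le_trans (min_le_left _ _) (min_le_right _ _)
      · exact le_trans (min_le_right _ _) (le_trans (min_le_left _ _) (min_le_left _ _))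
      · exact le_trans (min_le_right _ _) (le_trans (min_le_left _ _) (min_le_right _ _))
      · have h := le_trans
          (min_le_right (min η₁ η₂) (min (min η₃ η₄) (Z - τ)))
          (min_le_right (min η₃ η₄) (Z - τ))
        linarith [h]
    obtain ⟨hle₁, hle₂, hle₃, hle₄, hleZ⟩ := hηle
    have hmemA : τ + η ∈ A := by
      rw [hAmem]
      refine ⟨⟨by linarith [hτmem.1], hleZ⟩, ?_⟩
      intro s hs
      rcases le_or_gt s τ with hsτ | hsτ
      · exact hτQ ⟨hs.1, hsτ⟩
      · have hsI : s ∈ Icc (1:ℝ) Z := ⟨hs.1, by linarith [hs.2]⟩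
        have habs : |s - τ| = s - τ := abs_of_nonneg (by linarith)
        have hd : s - τ ≤ η := by linarith [hs.2]
        rw [hQmem]
        refine ⟨hsI, ⟨?_, ?_⟩, ?_, ?_⟩
        · have := hP₂ s hsI (by rw [habs]; linarith)
          simp only [Pi.neg_apply] at this
          linarith
        · exact (hP₁ s hsI (by rw [habs]; linarith)).le
        · exact hP₄ s hsI hsτ.le (by linarith)
        · exact (hP₃ s hsI (by rw [habs]; linarith)).le
    have hτub : τ + η ≤ τ := by
      have h := le_csSup hAbdd hmemA
      rwa [← hτdef] at h
    linarith
  -- assemble the result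
  have hfeq : ∀ p : ℝ, f p = (1 / ((n:ℝ) + 1)) * (Ω * (p + Ω ^ (-1 / (n:ℝ))) ^ n - 1) := by
    intro p
    rw [hfdef]
    rfl
  refine ⟨τ, hτmem.1, x₁, x₂, ?_, hx₁1, hx₂1, hx₁τ⟩
  intro ζ hζ
  refine ⟨hsol1 ζ hζ, ?_⟩
  have h := hsol2 ζ hζ
  rwa [hfeq (x₁ ζ)] at h


/-- For n odd and Ω > 0, the origin is an unstable equilibrium
of the shifted odd system: there exist ζ₀ > 0 and ε > 0 such that for every
δ > 0 some solution starts within Euclidean distance δ (but not at) the origin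
at ζ₀ and reaches distance at least ε at some ζ₁. -/
theorem laneEmden_odd_equilibrium_unstable
    (n : ℕ) (hn : 1 ≤ n) (hno : Odd n) (Ω : ℝ) (hΩ : 0 < Ω) :
    ∃ ζ₀ : ℝ, 0 < ζ₀ ∧ ∃ ε : ℝ, 0 < ε ∧
      ∀ δ : ℝ, 0 < δ →
        ∃ ζ₁ : ℝ, ζ₀ ≤ ζ₁ ∧ ∃ x₁ x₂ : ℝ → ℝ,
          IsSolShiftedOddOn n Ω ζ₀ ζ₁ x₁ x₂ ∧
          0 < Real.sqrt (x₁ ζ₀ ^ 2 + x₂ ζ₀ ^ 2) ∧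
          Real.sqrt (x₁ ζ₀ ^ 2 + x₂ ζ₀ ^ 2) < δ ∧
          ε ≤ Real.sqrt (x₁ ζ₁ ^ 2 + x₂ ζ₁ ^ 2) := by
  refine ⟨1, one_pos, 1, one_pos, ?_⟩
  intro δ hδ
  obtain ⟨a, ha0, ha2, haδ⟩ : ∃ a : ℝ, 0 < a ∧ a ≤ 1/2 ∧ a < δ :=
    ⟨min (δ/2) (1/2), by positivity, min_le_right _ _,
      lt_of_le_of_lt (min_le_left _ _) (by linarith)⟩
  obtain ⟨ζ₁, hζ₁, x₁, x₂, hsol, h1, h2, hfin⟩ := leKey n hn Ω hΩ a ha0 ha2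
  have hstart : Real.sqrt (x₁ 1 ^ 2 + x₂ 1 ^ 2) = a := by
    rw [h1, h2]
    simp [Real.sqrt_sq ha0.le]
  refine ⟨ζ₁, hζ₁, x₁, x₂, hsol, ?_, ?_, ?_⟩
  · rw [hstart]; exact ha0
  · rw [hstart]; exact haδ
  · have hle : x₁ ζ₁ ≤ Real.sqrt (x₁ ζ₁ ^ 2 + x₂ ζ₁ ^ 2) := by
      have h := Real.sqrt_le_sqrt
        (show x₁ ζ₁ ^ 2 ≤ x₁ ζ₁ ^ 2 + x₂ ζ₁ ^ 2 by nlinarith [sq_nonneg (x₂ ζ₁)])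
      rwa [Real.sqrt_sq (le_trans zero_le_one hfin)] at h
    linarith
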